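/- Consider the process that maintains a priority queue of tuples over layer-product indices (u,v) ∈ {1..p}×{1..q}, starting with ⌊(1,1)⌋, where popping ⌊(u,v)⌋ inserts ⌊(u+1,v)⌋, ⌊(u,v+1)⌋, and ⌈(u,v)⌉ (avoiding duplicates), and tuples are popped in lexicographic order of (value, index, isMax). Then whenever ⌊(u,v)⌋ is popped, ⌊(u−1,v)⌋ (if u > 1) and ⌊(u,v−1)⌋ (if v > 1) have already been popped. -/

import Mathlib

/-- A tuple in the priority queue: (value, layer-product index (u,v), isMax flag). -/
abbrev Tup := ℝ × (ℕ × ℕ) × Bool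

/-- Lexicographic order on index pairs. -/
def idxLt (a b : ℕ × ℕ) : Prop := a.1 < b.1 ∨ (a.1 = b.1 ∧ a.2 < b.2)

/-- Lexicographic order on tuples (value, index, flag), with false < true. -/
def tupLt (a b : Tup) : Prop :=
  a.1 < b.1 ∨ (a.1 = b.1 ∧ (idxLt a.2.1 b.2.1 ∨ (a.2.1 = b.2.1 ∧ a.2.2 < b.2.2)))

/-- ⌊(u,v)⌋ : the minimum tuple of layer product (u,v). -/
def floorT (lo : ℕ × ℕ → ℝ) (uv : ℕ × ℕ) : Tup := (lo uv, uv, false)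

/-- ⌈(u,v)⌉ : the maximum tuple of layer product (u,v). -/
def ceilT (hi : ℕ × ℕ → ℝ) (uv : ℕ × ℕ) : Tup := (hi uv, uv, true)

/-- Tuples inserted when a tuple is popped: popping ⌊(u,v)⌋ inserts ⌈(u,v)⌉,
⌊(u+1,v)⌋ and ⌊(u,v+1)⌋ (when in range 1..p × 1..q); popping ⌈(u,v)⌉ inserts
nothing. -/
noncomputable def succs (p q : ℕ) (lo hi : ℕ × ℕ → ℝ) (t : Tup) : Finset Tup :=
  if t.2.2 = true then ∅
  else
    {ceilT hi t.2.1}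
      ∪ (if t.2.1.1 + 1 ≤ p then {floorT lo (t.2.1.1 + 1, t.2.1.2)} else ∅)
      ∪ (if t.2.1.2 + 1 ≤ q then {floorT lo (t.2.1.1, t.2.1.2 + 1)} else ∅)

/-- A run of the layer-product popping process: `H t` is the heap content before
the `t`-th pop, `pop t` is the tuple popped at time `t`, and `N` is the number of
pops performed.  The heap starts with ⌊(1,1)⌋, each pop removes a minimum tuple
and inserts its successors, avoiding duplicates of already-popped tuples. -/
structure Run (p q : ℕ) (lo hi : ℕ × ℕ → ℝ) where
  N : ℕ
  H : ℕ → Finset Tup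
  pop : ℕ → Tup
  init : H 0 = {floorT lo (1, 1)}
  mem : ∀ t < N, pop t ∈ H t
  isMin : ∀ t < N, ∀ x ∈ H t, ¬ tupLt x (pop t)
  step : ∀ t < N, H (t + 1) =
    ((H t).erase (pop t)) ∪
      ((succs p q lo hi (pop t)) \ ((Finset.range (t + 1)).image pop))

-- characterization of succs membership
lemma mem_ite_singleton {c : Prop} [Decidable c] (a x : Tup) :
    x ∈ (if c then ({a} : Finset Tup) else ∅) ↔ c ∧ x = a := by
  split_ifs <;> simp_all

lemma mem_succs_iff (p q : ℕ) (lo hi : ℕ × ℕ → ℝ) (y x : Tup) :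
    x ∈ succs p q lo hi y ↔ y.2.2 = false ∧
      (x = ceilT hi y.2.1 ∨
       (y.2.1.1 + 1 ≤ p ∧ x = floorT lo (y.2.1.1 + 1, y.2.1.2)) ∨
       (y.2.1.2 + 1 ≤ q ∧ x = floorT lo (y.2.1.1, y.2.1.2 + 1))) := by
  by_cases hb : y.2.2 = true
  · simp [succs, hb]
  · rw [Bool.not_eq_true] at hb
    simp only [succs, hb, if_neg (by simp : ¬(false = true)), Finset.mem_union,
      mem_ite_singleton, Finset.mem_singleton]
    tauto

section Dev

variable {p q : ℕ} {lo hi : ℕ × ℕ → ℝ}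

/-- x popped before time t, or in the heap at time t. -/
def inS (r : Run p q lo hi) (t : ℕ) (x : Tup) : Prop :=
  (∃ s < t, r.pop s = x) ∨ x ∈ r.H t

lemma inS_mono_step (r : Run p q lo hi) {t : ℕ} (ht : t < r.N) {x : Tup}
    (hx : inS r t x) : inS r (t + 1) x := by
  rcases hx with ⟨s, hs, hsx⟩ | hx
  · exact Or.inl ⟨s, Nat.lt_succ_of_lt hs, hsx⟩
  · by_cases hxe : x = r.pop t
    · exact Or.inl ⟨t, Nat.lt_succ_self t, hxe.symm⟩
    · refine Or.inr ?_
      rw [r.step t ht]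
      exact Finset.mem_union_left _ (Finset.mem_erase.mpr ⟨hxe, hx⟩)

lemma inS_mono (r : Run p q lo hi) {s t : ℕ} (hst : s ≤ t) (ht : t ≤ r.N) {x : Tup}
    (hx : inS r s x) : inS r t x := by
  induction t with
  | zero => exact (Nat.le_zero.mp hst) ▸ hx
  | succ n ih =>
    rcases Nat.lt_succ_iff_lt_or_eq.mp (Nat.lt_succ_of_le hst) with h | h
    · exact inS_mono_step r (Nat.lt_of_succ_le ht) (ih (Nat.lt_succ_iff.mp h) (Nat.le_of_succ_le ht))
    · exact h ▸ hx

lemma succs_subset_inS (r : Run p q lo hi) {s : ℕ} (hs : s < r.N) {x : Tup}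
    (hx : x ∈ succs p q lo hi (r.pop s)) : inS r (s + 1) x := by
  by_cases hxe : x ∈ (Finset.range (s + 1)).image r.pop
  · obtain ⟨s', hs', hsx⟩ := Finset.mem_image.mp hxe
    exact Or.inl ⟨s', Finset.mem_range.mp hs', hsx⟩
  · refine Or.inr ?_
    rw [r.step s hs]
    exact Finset.mem_union_right _ (Finset.mem_sdiff.mpr ⟨hx, hxe⟩)

lemma inS_succ_cases (r : Run p q lo hi) {t : ℕ} (ht : t < r.N) {x : Tup}
    (hx : inS r (t + 1) x) : inS r t x ∨ x ∈ succs p q lo hi (r.pop t) := by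
  rcases hx with ⟨s, hs, hsx⟩ | hx
  · rcases Nat.lt_succ_iff_lt_or_eq.mp hs with h | h
    · exact Or.inl (Or.inl ⟨s, h, hsx⟩)
    · exact Or.inl (Or.inr (h ▸ hsx ▸ r.mem s (h ▸ ht)))
  · rw [r.step t ht] at hx
    rcases Finset.mem_union.mp hx with h | h
    · exact Or.inl (Or.inr (Finset.mem_erase.mp h).2)
    · exact Or.inr (Finset.mem_sdiff.mp h).1

lemma floorT_idx (lo : ℕ × ℕ → ℝ) {a b : ℕ × ℕ} (h : floorT lo a = floorT lo b) : a = b :=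
  congrArg (fun x : Tup => x.2.1) h

lemma tupLt_floor {a b : ℕ × ℕ} (h : lo a ≤ lo b) (hidx : idxLt a b) :
    tupLt (floorT lo a) (floorT lo b) := by
  unfold tupLt floorT
  rcases lt_or_eq_of_le h with h' | h'
  · exact Or.inl h'
  · exact Or.inr ⟨h', Or.inl hidx⟩

lemma invariant (r : Run p q lo hi) (hp : 1 ≤ p) (hq : 1 ≤ q)
    (hmx : ∀ a b : ℕ, lo (a, b) ≤ lo (a + 1, b))
    (hmy : ∀ a b : ℕ, lo (a, b) ≤ lo (a, b + 1)) :
    ∀ t ≤ r.N,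
      (∀ x ∈ r.H t, (1 ≤ x.2.1.1 ∧ x.2.1.1 ≤ p ∧ 1 ≤ x.2.1.2 ∧ x.2.1.2 ≤ q) ∧
        (x = floorT lo x.2.1 ∨ x = ceilT hi x.2.1)) ∧
      (∀ u v : ℕ, inS r t (floorT lo (u, v)) →
        (2 ≤ u → inS r t (floorT lo (u - 1, v))) ∧
        (2 ≤ v → inS r t (floorT lo (u, v - 1)))) := by
  intro t
  induction t with
  | zero =>
    intro _
    constructor
    · intro x hx
      rw [r.init, Finset.mem_singleton] at hx
      subst hx
      exact ⟨⟨le_refl 1, hp, le_refl 1, hq⟩, Or.inl rfl⟩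
    · intro u v huv
      rcases huv with ⟨s, hs, _⟩ | hH
      · omega
      · rw [r.init, Finset.mem_singleton] at hH
        have := floorT_idx lo hH
        have hu : u = 1 := congrArg Prod.fst this
        have hv : v = 1 := congrArg Prod.snd this
        constructor <;> intro h <;> omega
  | succ t ih =>
    intro htN
    have ht : t < r.N := Nat.lt_of_succ_le htN
    have iht := ih (le_of_lt ht)
    -- facts about the popped element
    have hmem := r.mem t ht
    have hrange := (iht.1 _ hmem).1
    have hshape := (iht.1 _ hmem).2
    constructor
    · -- range/shape invariant
      intro x hx
      rw [r.step t ht] at hx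
      rcases Finset.mem_union.mp hx with h | h
      · exact iht.1 x (Finset.mem_erase.mp h).2
      · have hxs := (Finset.mem_sdiff.mp h).1
        rw [mem_succs_iff] at hxs
        obtain ⟨hflag, hcase⟩ := hxs
        rcases hcase with hc | ⟨h1, hc⟩ | ⟨h1, hc⟩ <;> subst hc
        · exact ⟨hrange, Or.inr rfl⟩
        · exact ⟨⟨Nat.le_add_left 1 _, h1, hrange.2.2.1, hrange.2.2.2⟩, Or.inl rfl⟩
        · exact ⟨⟨hrange.1, hrange.2.1, Nat.le_add_left 1 _, h1⟩, Or.inl rfl⟩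
    · -- down-closure invariant
      intro u v huv
      rcases inS_succ_cases r ht huv with hold | hsucc
      · have := iht.2 u v hold
        exact ⟨fun h2 => inS_mono_step r ht (this.1 h2),
               fun h2 => inS_mono_step r ht (this.2 h2)⟩
      · rw [mem_succs_iff] at hsucc
        obtain ⟨hflag, hcase⟩ := hsucc
        -- the popped element is a floor tuple
        have hpopfl : r.pop t = floorT lo ((r.pop t).2.1.1, (r.pop t).2.1.2) := by
          rcases hshape with h | h
          · exact h
          · rw [h] at hflag; simp [ceilT] at hflag
        set u0 := (r.pop t).2.1.1 with hu0
        set v0 := (r.pop t).2.1.2 with hv0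
        have hpopS : inS r t (floorT lo (u0, v0)) := Or.inr (hpopfl ▸ hmem)
        rcases hcase with hc | ⟨h1, hc⟩ | ⟨h1, hc⟩
        · -- impossible: a floor equals a ceil
          exact absurd (congrArg (fun x : Tup => x.2.2) hc) (by simp [floorT, ceilT])
        · -- x = floorT (u0+1, v0)
          have hidx := floorT_idx lo hc
          have hu : u = u0 + 1 := congrArg Prod.fst hidx
          have hv : v = v0 := congrArg Prod.snd hidx
          constructor
          · intro _
            refine Or.inl ⟨t, Nat.lt_succ_self t, ?_⟩
            rw [hpopfl, hu, hv, Nat.add_sub_cancel]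
          · intro h2
            rw [hv] at h2
            -- need floorT (u0+1, v0-1) popped-or-present at t+1
            have hDt := (iht.2 u0 v0 hpopS).2 h2
            rw [hu, hv]
            rcases hDt with ⟨s, hs, hsx⟩ | hH
            · have hmemS : floorT lo (u0 + 1, v0 - 1) ∈ succs p q lo hi (r.pop s) := by
                rw [mem_succs_iff, hsx]
                exact ⟨rfl, Or.inr (Or.inl ⟨h1, rfl⟩)⟩
              have hsN : s < r.N := lt_trans hs ht
              exact inS_mono r (Nat.succ_le_succ (le_of_lt hs)) htN
                (succs_subset_inS r hsN hmemS)
            · exfalso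
              apply r.isMin t ht _ hH
              rw [hpopfl]
              apply tupLt_floor
              · have := hmy u0 (v0 - 1)
                rwa [Nat.sub_add_cancel (by omega : 1 ≤ v0)] at this
              · exact Or.inr ⟨rfl, by omega⟩
        · -- x = floorT (u0, v0+1)
          have hidx := floorT_idx lo hc
          have hu : u = u0 := congrArg Prod.fst hidx
          have hv : v = v0 + 1 := congrArg Prod.snd hidx
          constructor
          · intro h2
            rw [hu] at h2
            have hDt := (iht.2 u0 v0 hpopS).1 h2
            rw [hu, hv]
            rcases hDt with ⟨s, hs, hsx⟩ | hH
            · have hmemS : floorT lo (u0 - 1, v0 + 1) ∈ succs p q lo hi (r.pop s) := by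
                rw [mem_succs_iff, hsx]
                exact ⟨rfl, Or.inr (Or.inr ⟨h1, rfl⟩)⟩
              have hsN : s < r.N := lt_trans hs ht
              exact inS_mono r (Nat.succ_le_succ (le_of_lt hs)) htN
                (succs_subset_inS r hsN hmemS)
            · exfalso
              apply r.isMin t ht _ hH
              rw [hpopfl]
              apply tupLt_floor
              · have := hmx (u0 - 1) v0
                rwa [Nat.sub_add_cancel (by omega : 1 ≤ u0)] at this
              · exact Or.inl (by omega)
          · intro _
            refine Or.inl ⟨t, Nat.lt_succ_self t, ?_⟩
            rw [hpopfl, hu, hv, Nat.add_sub_cancel]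

end Dev

/-- In the layer-product popping process, whenever ⌊(u,v)⌋ is
popped, ⌊(u−1,v)⌋ (if u > 1) and ⌊(u,v−1)⌋ (if v > 1) were popped earlier. -/
theorem floor_popped_implies_predecessors_popped (p q : ℕ) (hp : 1 ≤ p) (hq : 1 ≤ q)
    (X Y : ℕ → Finset ℝ)
    (hXne : ∀ u, (X u).Nonempty) (hYne : ∀ v, (Y v).Nonempty)
    (hXord : ∀ u v, u < v → ∀ a ∈ X u, ∀ b ∈ X v, a ≤ b)
    (hYord : ∀ u v, u < v → ∀ a ∈ Y u, ∀ b ∈ Y v, a ≤ b)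
    (lo hi : ℕ × ℕ → ℝ)
    (hlo : ∀ uv : ℕ × ℕ, lo uv = (X uv.1).min' (hXne uv.1) + (Y uv.2).min' (hYne uv.2))
    (hhi : ∀ uv : ℕ × ℕ, hi uv = (X uv.1).max' (hXne uv.1) + (Y uv.2).max' (hYne uv.2))
    (r : Run p q lo hi) (t : ℕ) (ht : t < r.N) (u v : ℕ)
    (hpop : r.pop t = floorT lo (u, v)) :
    (1 < u → ∃ t' < t, r.pop t' = floorT lo (u - 1, v)) ∧
    (1 < v → ∃ t' < t, r.pop t' = floorT lo (u, v - 1)) := by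
  have hmx : ∀ a b : ℕ, lo (a, b) ≤ lo (a + 1, b) := by
    intro a b
    rw [hlo, hlo]
    exact add_le_add_left
      (hXord a (a + 1) (Nat.lt_succ_self a) _ (Finset.min'_mem _ _) _ (Finset.min'_mem _ _)) _
  have hmy : ∀ a b : ℕ, lo (a, b) ≤ lo (a, b + 1) := by
    intro a b
    rw [hlo, hlo]
    exact add_le_add_right
      (hYord b (b + 1) (Nat.lt_succ_self b) _ (Finset.min'_mem _ _) _ (Finset.min'_mem _ _)) _
  have hinv := invariant r hp hq hmx hmy t (le_of_lt ht)
  have hpopS : inS r t (floorT lo (u, v)) := Or.inr (hpop ▸ r.mem t ht)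
  have hD := hinv.2 u v hpopS
  constructor
  · intro hu
    rcases hD.1 hu with ⟨s, hs, hsx⟩ | hH
    · exact ⟨s, hs, hsx⟩
    · exfalso
      apply r.isMin t ht _ hH
      rw [hpop]
      apply tupLt_floor
      · have := hmx (u - 1) v
        rwa [Nat.sub_add_cancel (by omega : 1 ≤ u)] at this
      · exact Or.inl (by omega)
  · intro hv
    rcases hD.2 hv with ⟨s, hs, hsx⟩ | hH
    · exact ⟨s, hs, hsx⟩
    · exfalso
      apply r.isMin t ht _ hH
      rw [hpop]
      apply tupLt_floor
      · have := hmy u (v - 1)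
        rwa [Nat.sub_add_cancel (by omega : 1 ≤ v)] at this
      · exact Or.inr ⟨rfl, by omega⟩
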